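/- The language Q_I of ins-robust primitive words over an alphabet with at least two letters is not regular. -/

import Mathlib

/-- `wpow v n` is the word `v` repeated `n` times. -/
def wpow {V : Type*} (v : List V) : ℕ → List V
  | 0 => []
  | n + 1 => v ++ wpow v n

/-- A word is primitive if it is nonempty and not a proper power. -/
def Primitive {V : Type*} (w : List V) : Prop :=
  w ≠ [] ∧ ∀ (v : List V) (n : ℕ), w = wpow v n → n = 1

/-- A word is ins-robust if it is primitive and inserting any letter at any
position yields a primitive word. -/
def InsRobust {V : Type*} (w : List V) : Prop :=
  Primitive w ∧ ∀ (x y : List V) (a : V), w = x ++ y → Primitive (x ++ a :: y)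

/-- `HasPeriod w p` : the word `w` is periodic with period `p`. -/
def HasPeriod {V : Type*} (w : List V) (p : ℕ) : Prop :=
  ∀ i, i + p < w.length → w[i]? = w[i + p]?



namespace QIaux

variable {V : Type*}

lemma wpow_count [DecidableEq V] (v : List V) (c : V) :
    ∀ n, (wpow v n).count c = n * v.count c
  | 0 => by simp [wpow]
  | n + 1 => by simp [wpow, wpow_count v c n]; ring

lemma wpow_two (v : List V) : wpow v 2 = v ++ v := by simp [wpow]

lemma wpow_three (v : List V) : wpow v 3 = v ++ (v ++ v) := by simp [wpow]

lemma prim_of_count_one [DecidableEq V] {w : List V} {c : V}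
    (hne : w ≠ []) (h : w.count c = 1) : Primitive w := by
  refine ⟨hne, ?_⟩
  rintro v n rfl
  rw [wpow_count] at h
  exact (Nat.eq_one_of_mul_eq_one_right h)

lemma split_first {b : V} {xs : List V} :
    ∀ {xs' ys ys' : List V}, xs ++ b :: ys = xs' ++ b :: ys' →
      b ∉ xs → b ∉ xs' → xs = xs' ∧ ys = ys' := by
  induction xs with
  | nil =>
    intro xs' ys ys' h h1 h2
    cases xs' with
    | nil => simpa using h
    | cons c t =>
      simp only [List.nil_append, List.cons_append, List.cons.injEq] at h
      exact absurd (h.1 ▸ (List.mem_cons_self : c ∈ c :: t)) h2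
  | cons c t ih =>
    intro xs' ys ys' h h1 h2
    cases xs' with
    | nil =>
      simp only [List.nil_append, List.cons_append, List.cons.injEq] at h
      exact absurd (h.1.symm ▸ (List.mem_cons_self : c ∈ c :: t)) h1
    | cons c' t' =>
      simp only [List.cons_append, List.cons.injEq] at h
      obtain ⟨rfl, h⟩ := h
      have h1' : b ∉ t := fun hm => h1 (List.mem_cons_of_mem _ hm)
      have h2' : b ∉ t' := fun hm => h2 (List.mem_cons_of_mem _ hm)
      obtain ⟨rfl, rfl⟩ := ih h h1' h2'
      exact ⟨rfl, rfl⟩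

lemma exists_first_split [DecidableEq V] {b : V} {v : List V} (h : b ∈ v) :
    ∃ xs ys, v = xs ++ b :: ys ∧ b ∉ xs := by
  induction v with
  | nil => simp at h
  | cons c t ih =>
    by_cases hc : c = b
    · exact ⟨[], t, by rw [hc]; rfl, by simp⟩
    · have hbt : b ∈ t := by
        rcases List.mem_cons.mp h with h' | h'
        · exact absurd h'.symm hc
        · exact h'
      obtain ⟨xs, ys, rfl, hx⟩ := ih hbt
      exact ⟨c :: xs, ys, by simp, by
        intro hm
        rcases List.mem_cons.mp hm with h' | h'
        · exact hc h'.symm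
        · exact hx h'⟩

lemma count_one_split [DecidableEq V] {b : V} {v : List V} (h : v.count b = 1) :
    ∃ xs ys, v = xs ++ b :: ys ∧ b ∉ xs ∧ b ∉ ys := by
  have hb : b ∈ v := by
    rw [← List.count_pos_iff]; omega
  obtain ⟨xs, ys, rfl, hx⟩ := exists_first_split hb
  refine ⟨xs, ys, rfl, hx, ?_⟩
  have hx0 : xs.count b = 0 := List.count_eq_zero.mpr hx
  rw [← List.count_eq_zero]
  simp [List.count_append, List.count_cons, hx0] at h ⊢
  omega


open List

lemma not_mem_rep {a b : V} (hab : a ≠ b) (p : ℕ) : b ∉ replicate p a := by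
  simp [List.mem_replicate]; tauto


lemma sq2 [DecidableEq V] {a b : V} (hab : a ≠ b) {p q : ℕ} {v : List V}
    (h : v ++ v = replicate p a ++ b :: (replicate q a ++ [b]))
    (hc : v.count b = 1) : p = q := by
  obtain ⟨xs, ys, rfl, hx, hy⟩ := count_one_split hc
  have h' : xs ++ b :: (ys ++ (xs ++ b :: ys)) =
      replicate p a ++ b :: (replicate q a ++ b :: []) := by
    simpa using h
  obtain ⟨he, h2⟩ := split_first h' hx (not_mem_rep hab p)
  have h2' : (ys ++ xs) ++ b :: ys = replicate q a ++ b :: [] := by simpa using h2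
  obtain ⟨he2, hys⟩ := split_first h2' (by simp [hx, hy]) (not_mem_rep hab q)
  have l1 := congrArg List.length he
  have l2 := congrArg List.length he2
  have l3 := congrArg List.length hys
  simp only [List.length_replicate, List.length_append, List.length_nil, List.length_cons] at l1 l2 l3
  omega

lemma sq2a [DecidableEq V] {a b : V} (hab : a ≠ b) {p q : ℕ} {v : List V}
    (h : v ++ v = replicate p a ++ b :: (replicate q a ++ b :: [a]))
    (hc : v.count b = 1) : q = p + 1 := by
  obtain ⟨xs, ys, rfl, hx, hy⟩ := count_one_split hc
  have h' : xs ++ b :: (ys ++ (xs ++ b :: ys)) =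
      replicate p a ++ b :: (replicate q a ++ b :: [a]) := by
    simpa using h
  obtain ⟨he, h2⟩ := split_first h' hx (not_mem_rep hab p)
  have h2' : (ys ++ xs) ++ b :: ys = replicate q a ++ b :: [a] := by simpa using h2
  obtain ⟨he2, hys⟩ := split_first h2' (by simp [hx, hy]) (not_mem_rep hab q)
  have l1 := congrArg List.length he
  have l2 := congrArg List.length he2
  have l3 := congrArg List.length hys
  simp only [List.length_replicate, List.length_append, List.length_nil, List.length_cons] at l1 l2 l3
  omega

lemma cube3 [DecidableEq V] {a b : V} (hab : a ≠ b) {p q r : ℕ} {v : List V}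
    (h : v ++ (v ++ v) =
      replicate p a ++ b :: (replicate q a ++ b :: (replicate r a ++ [b])))
    (hc : v.count b = 1) : p = q ∧ q = r := by
  obtain ⟨xs, ys, rfl, hx, hy⟩ := count_one_split hc
  have h' : xs ++ b :: (ys ++ (xs ++ b :: (ys ++ (xs ++ b :: ys)))) =
      replicate p a ++ b :: (replicate q a ++ b :: (replicate r a ++ b :: [])) := by
    simpa using h
  obtain ⟨he, h2⟩ := split_first h' hx (not_mem_rep hab p)
  have h2' : (ys ++ xs) ++ b :: (ys ++ (xs ++ b :: ys)) =
      replicate q a ++ b :: (replicate r a ++ b :: []) := by simpa using h2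
  obtain ⟨he2, h4⟩ := split_first h2' (by simp [hx, hy]) (not_mem_rep hab q)
  have h4' : (ys ++ xs) ++ b :: ys = replicate r a ++ b :: [] := by simpa using h4
  obtain ⟨he3, hys⟩ := split_first h4' (by simp [hx, hy]) (not_mem_rep hab r)
  have l1 := congrArg List.length he
  have l2 := congrArg List.length he2
  have l3 := congrArg List.length he3
  have l4 := congrArg List.length hys
  simp only [List.length_replicate, List.length_append, List.length_nil, List.length_cons] at l1 l2 l3 l4
  omega

lemma prim2 [DecidableEq V] {a b : V} (hab : a ≠ b) {p q : ℕ} (hpq : p ≠ q) :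
    Primitive (replicate p a ++ b :: (replicate q a ++ [b])) := by
  refine ⟨by simp, ?_⟩
  intro v n h
  have hcnt : (replicate p a ++ b :: (replicate q a ++ [b])).count b = 2 := by
    simp [List.count_append, List.count_cons, List.count_replicate, hab]
  rw [h, wpow_count] at hcnt
  have hn0 : n ≠ 0 := by
    rintro rfl
    exact absurd h.symm (by simp [wpow])
  have hn : n = 1 ∨ (n = 2 ∧ v.count b = 1) := by
    have hdvd : n ∣ 2 := ⟨v.count b, hcnt.symm⟩
    have hle : n ≤ 2 := Nat.le_of_dvd (by norm_num) hdvd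
    interval_cases n <;> omega
  rcases hn with rfl | ⟨rfl, hc1⟩
  · rfl
  · exfalso
    rw [wpow_two] at h
    exact hpq (sq2 hab h.symm hc1)

lemma prim2a [DecidableEq V] {a b : V} (hab : a ≠ b) {p q : ℕ} (hpq : q ≠ p + 1) :
    Primitive (replicate p a ++ b :: (replicate q a ++ b :: [a])) := by
  refine ⟨by simp, ?_⟩
  intro v n h
  have hcnt : (replicate p a ++ b :: (replicate q a ++ b :: [a])).count b = 2 := by
    simp [List.count_append, List.count_cons, List.count_replicate, hab]
  rw [h, wpow_count] at hcnt
  have hn0 : n ≠ 0 := by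
    rintro rfl
    exact absurd h.symm (by simp [wpow])
  have hn : n = 1 ∨ (n = 2 ∧ v.count b = 1) := by
    have hdvd : n ∣ 2 := ⟨v.count b, hcnt.symm⟩
    have hle : n ≤ 2 := Nat.le_of_dvd (by norm_num) hdvd
    interval_cases n <;> omega
  rcases hn with rfl | ⟨rfl, hc1⟩
  · rfl
  · exfalso
    rw [wpow_two] at h
    exact hpq (sq2a hab h.symm hc1)

lemma prim3 [DecidableEq V] {a b : V} (hab : a ≠ b) {p q r : ℕ}
    (hpq : ¬(p = q ∧ q = r)) :
    Primitive (replicate p a ++ b :: (replicate q a ++ b :: (replicate r a ++ [b]))) := by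
  refine ⟨by simp, ?_⟩
  intro v n h
  have hcnt :
      (replicate p a ++ b :: (replicate q a ++ b :: (replicate r a ++ [b]))).count b = 3 := by
    simp [List.count_append, List.count_cons, List.count_replicate, hab]
  rw [h, wpow_count] at hcnt
  have hn0 : n ≠ 0 := by
    rintro rfl
    exact absurd h.symm (by simp [wpow])
  have hn : n = 1 ∨ (n = 3 ∧ v.count b = 1) := by
    have hdvd : n ∣ 3 := ⟨v.count b, hcnt.symm⟩
    have hle : n ≤ 3 := Nat.le_of_dvd (by norm_num) hdvd
    interval_cases n <;> omega
  rcases hn with rfl | ⟨rfl, hc1⟩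
  · rfl
  · exfalso
    rw [wpow_three] at h
    exact hpq (cube3 hab h.symm hc1)

lemma rep_decomp {x z : List V} {c : V} {m : ℕ} (h : replicate m c = x ++ z) :
    x = replicate x.length c ∧ z = replicate z.length c ∧ x.length + z.length = m := by
  have hx : ∀ d ∈ x, d = c := fun d hd => by
    have : d ∈ replicate m c := by rw [h]; exact List.mem_append_left _ hd
    exact List.eq_of_mem_replicate this
  have hz : ∀ d ∈ z, d = c := fun d hd => by
    have : d ∈ replicate m c := by rw [h]; exact List.mem_append_right _ hd
    exact List.eq_of_mem_replicate this
  have hl := congrArg List.length h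
  simp only [List.length_replicate, List.length_append] at hl
  exact ⟨List.eq_replicate_iff.mpr ⟨rfl, hx⟩, List.eq_replicate_iff.mpr ⟨rfl, hz⟩, hl.symm⟩

lemma append_split {x y : List V} {a b : V} {m n : ℕ}
    (h : x ++ y = replicate m a ++ b :: (replicate n a ++ [b])) :
    (∃ k, k ≤ m ∧ x = replicate k a ∧
        y = replicate (m - k) a ++ b :: (replicate n a ++ [b])) ∨
    (∃ j, j ≤ n ∧ x = replicate m a ++ b :: replicate j a ∧
        y = replicate (n - j) a ++ [b]) ∨
    (x = replicate m a ++ b :: (replicate n a ++ [b]) ∧ y = []) := by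
  rcases List.append_eq_append_iff.mp h with ⟨l, hl1, hl2⟩ | ⟨l, hl1, hl2⟩
  · obtain ⟨hx, hz, hlen⟩ := rep_decomp hl1
    left
    refine ⟨x.length, by omega, hx, ?_⟩
    rw [hl2, hz]
    congr 2
    omega
  · cases l with
    | nil =>
      left
      refine ⟨m, le_refl m, by simpa using hl1, ?_⟩
      rw [Nat.sub_self]
      simpa using hl2.symm
    | cons c t =>
      rw [List.cons_append] at hl2
      injection hl2 with h1 h2
      subst h1
      rcases List.append_eq_append_iff.mp h2 with ⟨l2, hl3, hl4⟩ | ⟨l2, hl3, hl4⟩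
      · -- hl3 : t = replicate n a ++ l2, hl4 : [b] = l2 ++ y
        cases l2 with
        | nil =>
          right; left
          refine ⟨n, le_refl n, ?_, ?_⟩
          · rw [hl1, hl3]
            simp
          · rw [Nat.sub_self]
            simpa using hl4.symm
        | cons d t2 =>
          rw [List.cons_append] at hl4
          injection hl4 with h3 h4
          subst h3
          obtain ⟨rfl, rfl⟩ := List.append_eq_nil_iff.mp h4.symm
          right; right
          refine ⟨?_, rfl⟩
          rw [hl1, hl3]
      · -- hl3 : replicate n a = t ++ l2, hl4 : y = l2 ++ [b]
        obtain ⟨ht, hz, hlen⟩ := rep_decomp hl3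
        right; left
        refine ⟨t.length, by omega, ?_, ?_⟩
        · rw [hl1, ← ht]
        · rw [hl4, hz]
          congr 2
          omega

lemma rep_glue (k l : ℕ) (a : V) (s : List V) :
    replicate k a ++ (a :: (replicate l a ++ s)) = replicate (k + l + 1) a ++ s := by
  have hkl : k + l + 1 = k + (l + 1) := by omega
  rw [hkl, List.replicate_add, List.replicate_succ, List.append_assoc, List.cons_append]

lemma mem_ir [DecidableEq V] {a b : V} (hab : a ≠ b) {m n : ℕ}
    (hn : m + 2 ≤ n) (h2m : n ≠ 2 * m) :
    InsRobust (replicate m a ++ b :: (replicate n a ++ [b])) := by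
  constructor
  · exact prim2 hab (by omega)
  · intro x y c h
    by_cases hca : c = a
    · subst hca
      rcases append_split h.symm with ⟨k, hk, rfl, rfl⟩ | ⟨j, hj, rfl, rfl⟩ | ⟨rfl, rfl⟩
      · have he : replicate k c ++ c :: (replicate (m - k) c ++ b :: (replicate n c ++ [b]))
            = replicate (m + 1) c ++ b :: (replicate n c ++ [b]) := by
          rw [show (m:ℕ) + 1 = k + (m - k) + 1 by omega]
          rw [← rep_glue k (m - k) c (b :: (replicate n c ++ [b]))]
        rw [he]
        exact prim2 hab (by omega)
      · have he : (replicate m c ++ b :: replicate j c) ++ c :: (replicate (n - j) c ++ [b])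
            = replicate m c ++ b :: (replicate (n + 1) c ++ [b]) := by
          rw [show (n:ℕ) + 1 = j + (n - j) + 1 by omega]
          rw [← rep_glue j (n - j) c [b]]
          simp
        rw [he]
        exact prim2 hab (by omega)
      · have he : (replicate m c ++ b :: (replicate n c ++ [b])) ++ c :: []
            = replicate m c ++ b :: (replicate n c ++ b :: [c]) := by simp
        rw [he]
        exact prim2a hab (by omega)
    · by_cases hcb : c = b
      · subst hcb
        rcases append_split h.symm with ⟨k, hk, rfl, rfl⟩ | ⟨j, hj, rfl, rfl⟩ | ⟨rfl, rfl⟩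
        · exact prim3 hab (by omega)
        · have he : (replicate m a ++ c :: replicate j a) ++ c :: (replicate (n - j) a ++ [c])
              = replicate m a ++ c :: (replicate j a ++ c :: (replicate (n - j) a ++ [c])) := by
            simp
          rw [he]
          exact prim3 hab (by omega)
        · have he : (replicate m a ++ c :: (replicate n a ++ [c])) ++ c :: []
              = replicate m a ++ c :: (replicate n a ++ c :: (replicate 0 a ++ [c])) := by
            simp
          rw [he]
          exact prim3 hab (by omega)
      · apply prim_of_count_one (c := c) (by simp)
        have h0 : (x ++ y).count c = 0 := by
          rw [← h]
          simp [List.count_append, List.count_cons, List.count_replicate,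
            Ne.symm hca, Ne.symm hcb]
        rw [List.count_append] at h0
        rw [List.count_append, List.count_cons_self]
        omega

lemma flatten_rep (j k : ℕ) (a : V) :
    (List.replicate j (List.replicate k a)).flatten = List.replicate (j * k) a := by
  induction j with
  | zero => simp
  | succ i ih =>
    rw [List.replicate_succ, List.flatten_cons, ih, Nat.succ_mul, Nat.add_comm,
      List.replicate_add]

end QIaux

open QIaux List in
theorem stmt12 {V : Type*} (hV : ∃ a b : V, a ≠ b) :
    ¬ Language.IsRegular {w : List V | InsRobust w} := by
  classical
  obtain ⟨a, b, hab⟩ := hV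
  rintro ⟨σ, fσ, M, hM⟩
  set p := Fintype.card σ with hp
  set m := p + 3 with hmdef
  set n := m + m.factorial with hndef
  have hfaclt : m < m.factorial := Nat.lt_factorial_self (by omega)
  set w := replicate m a ++ b :: (replicate n a ++ [b]) with hw
  have hmem : w ∈ M.accepts := by
    rw [hM]
    exact mem_ir hab (by omega) (by omega)
  have hlen : Fintype.card σ ≤ w.length := by
    rw [hw]
    simp only [List.length_append, List.length_replicate, List.length_cons]
    omega
  obtain ⟨u, v, z, hx, hlen2, hvne, hpump⟩ := M.pumping_lemma hmem hlen
  have h1 : (u ++ v) ++ z = replicate m a ++ (b :: (replicate n a ++ [b])) := by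
    rw [← hx]
  have hL : (u ++ v).length ≤ p := by
    simpa using hlen2
  have hk1 : 1 ≤ v.length := by
    cases v with
    | nil => exact absurd rfl hvne
    | cons _ _ => simp
  rcases List.append_eq_append_iff.mp h1 with ⟨l, hl1, hl2⟩ | ⟨l, hl1, hl2⟩
  · -- replicate m a = (u ++ v) ++ l,  z = l ++ rest
    obtain ⟨huv, hl, hlen3⟩ := rep_decomp hl1
    obtain ⟨hu, hv, hlen4⟩ := rep_decomp huv.symm
    obtain ⟨lu, rfl⟩ : ∃ t, u = replicate t a := ⟨u.length, hu⟩
    obtain ⟨k, rfl⟩ : ∃ t, v = replicate t a := ⟨v.length, hv⟩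
    obtain ⟨ll, rfl⟩ : ∃ t, l = replicate t a := ⟨l.length, hl⟩
    simp only [List.length_replicate, List.length_append] at hlen3 hlen4 hL hk1
    have hkm : k ≤ m := by omega
    have hkdvd : k ∣ m.factorial := Nat.dvd_factorial hk1 hkm
    set j := m.factorial / k + 1 with hjdef
    have hjk : j * k = m.factorial + k := by
      rw [hjdef, Nat.add_mul, Nat.one_mul, Nat.div_mul_cancel hkdvd]
    -- pumped word is accepted
    have hy : (replicate lu a ++ (List.replicate j (replicate k a)).flatten) ++ z ∈
        ({replicate lu a} : Language V) * KStar.kstar {replicate k a} * {z} := by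
      apply Language.mem_mul.mpr
      refine ⟨replicate lu a ++ (List.replicate j (replicate k a)).flatten, ?_, z, rfl, rfl⟩
      apply Language.mem_mul.mpr
      refine ⟨replicate lu a, rfl, (List.replicate j (replicate k a)).flatten,
        Language.join_mem_kstar ?_, rfl⟩
      intro y hy
      rw [List.eq_of_mem_replicate hy]
      rfl
    have hacc := hpump hy
    rw [hM] at hacc
    have hins : InsRobust ((replicate lu a ++ (List.replicate j (replicate k a)).flatten) ++ z) :=
      hacc
    -- compute the pumped word
    have hsum : lu + (j * k + ll) = n := by omega
    have heq : (replicate lu a ++ (List.replicate j (replicate k a)).flatten) ++ z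
        = replicate n a ++ b :: (replicate n a ++ [b]) := by
      rw [flatten_rep, hl2, show (n : ℕ) = lu + j * k + ll from by omega,
        List.replicate_add (lu + j * k) ll, List.replicate_add lu (j * k)]
      simp only [List.append_assoc]
    have hprim := hins.1
    have h21 : (2 : ℕ) = 1 := by
      apply hprim.2 (replicate n a ++ [b])
      rw [heq, wpow_two]
      simp
    omega
  · -- u ++ v = replicate m a ++ l : too long
    have e1 := congrArg List.length hl1
    simp only [List.length_append, List.length_replicate] at e1
    have e2 := hL
    simp only [List.length_append] at e2
    omega
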